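/- Let q_1, ..., q_n be positive real numbers with q_1 + ... + q_n = H for a positive integer H, let h be a vector of nonnegative integers with h_1 + ... + h_n = H, and let λ ∈ (0,1) be rational such that λ·h_i is an integer for every i. Then: (i) if [q_i] = h_i for all i, then Σ_i [λq_i] = λH; (ii) if [q_i] ≥ h_i for all i and Σ_i [q_i] = H + c for some integer c > 0, then λH ≤ Σ_i [λq_i] ≤ λH + c; if [q_i] ≤ h_i for all i and Σ_i [q_i] = H − c for some integer c > 0, then λH − c ≤ Σ_i [λq_i] ≤ λH; and in both cases of (ii), if λ ≤ 1/(2k+1) where k is an integer with k ≥ max_i |[q_i] − h_i|, then Σ_i [λq_i] = λH. -/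

import Mathlib

lemma my_round_le (x : ℝ) (d : ℤ) (hx : x < (d:ℝ) + 1/2) : round x ≤ d := by
  rw [round_eq, ← Int.lt_add_one_iff, Int.floor_lt]
  push_cast; linarith

lemma my_le_round (x : ℝ) (d : ℤ) (hx : (d:ℝ) - 1/2 ≤ x) : d ≤ round x := by
  rw [round_eq, Int.le_floor]; linarith

lemma my_rbound (lam x : ℝ) (d : ℤ) (hl0 : 0 < lam) (hl1 : lam < 1) (hd : 0 ≤ d)
    (hx1 : -(d:ℝ) - 1/2 ≤ x) (hx2 : x < (d:ℝ) + 1/2) :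
    -d ≤ round (lam * x) ∧ round (lam * x) ≤ d := by
  have hd' : (0:ℝ) ≤ d := by exact_mod_cast hd
  constructor
  · apply my_le_round
    push_cast
    nlinarith [mul_nonneg (le_of_lt hl0) (by linarith : (0:ℝ) ≤ x + d + 1/2)]
  · apply my_round_le
    nlinarith [mul_pos hl0 (by linarith : (0:ℝ) < (d:ℝ) + 1/2 - x)]

lemma my_rsharp (lam x : ℝ) (k : ℤ) (hl0 : 0 < lam) (hk : 0 ≤ k)
    (hl : lam * (2*(k:ℝ)+1) ≤ 1)
    (hx1 : -(k:ℝ) - 1/2 ≤ x) (hx2 : x < (k:ℝ) + 1/2) : round (lam * x) = 0 := by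
  have hk' : (0:ℝ) ≤ k := by exact_mod_cast hk
  have h1 : round (lam * x) ≤ 0 := by
    apply my_round_le
    push_cast
    nlinarith [mul_pos hl0 (by linarith : (0:ℝ) < (k:ℝ) + 1/2 - x)]
  have h2 : (0:ℤ) ≤ round (lam * x) := by
    apply my_le_round
    push_cast
    nlinarith [mul_nonneg (le_of_lt hl0) (by linarith : (0:ℝ) ≤ x + k + 1/2)]
  omega

lemma my_qub (x : ℝ) : x < (round x : ℝ) + 1/2 := by
  have := Int.lt_floor_add_one (x + 1/2)
  rw [← round_eq] at this; linarith

lemma my_qlb (x : ℝ) : (round x : ℝ) - 1/2 ≤ x := by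
  have := Int.floor_le (x + 1/2)
  rw [← round_eq] at this; linarith

theorem stmt_14 (n : ℕ) (H : ℕ) (hH : 0 < H)
    (q : Fin n → ℝ) (hq : ∀ i, 0 < q i) (hqsum : ∑ i, q i = (H : ℝ))
    (h : Fin n → ℕ) (hsum : ∑ i, h i = H)
    (lam : ℚ) (hlam0 : 0 < lam) (hlam1 : lam < 1)
    (hint : ∀ i, ∃ m : ℕ, (m : ℚ) = lam * (h i : ℚ))
    (H' : ℕ) (hH' : (H' : ℚ) = lam * (H : ℚ)) :
    ((∀ i, round (q i) = (h i : ℤ)) → ∑ i, round ((lam : ℝ) * q i) = (H' : ℤ)) ∧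
    (∀ c : ℤ, 0 < c → (∀ i, (h i : ℤ) ≤ round (q i)) →
      ∑ i, round (q i) = (H : ℤ) + c →
      ((H' : ℤ) ≤ ∑ i, round ((lam : ℝ) * q i) ∧
        ∑ i, round ((lam : ℝ) * q i) ≤ (H' : ℤ) + c) ∧
      (∀ k : ℤ, (∀ i, |round (q i) - (h i : ℤ)| ≤ k) → lam ≤ 1 / (2 * (k : ℚ) + 1) →
        ∑ i, round ((lam : ℝ) * q i) = (H' : ℤ))) ∧
    (∀ c : ℤ, 0 < c → (∀ i, round (q i) ≤ (h i : ℤ)) →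
      ∑ i, round (q i) = (H : ℤ) - c →
      ((H' : ℤ) - c ≤ ∑ i, round ((lam : ℝ) * q i) ∧
        ∑ i, round ((lam : ℝ) * q i) ≤ (H' : ℤ)) ∧
      (∀ k : ℤ, (∀ i, |round (q i) - (h i : ℤ)| ≤ k) → lam ≤ 1 / (2 * (k : ℚ) + 1) →
        ∑ i, round ((lam : ℝ) * q i) = (H' : ℤ))) := by
  choose m hm using hint
  have hlamR0 : (0:ℝ) < (lam:ℝ) := by exact_mod_cast hlam0
  have hlamR1 : ((lam:ℝ)) < 1 := by exact_mod_cast hlam1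
  have hmR : ∀ i, ((m i : ℝ)) = (lam:ℝ) * (h i : ℝ) := by
    intro i; exact_mod_cast hm i
  have key : ∀ i, round ((lam:ℝ) * q i) =
      round ((lam:ℝ) * (q i - (h i : ℝ))) + (m i : ℤ) := by
    intro i
    have h1 : (lam:ℝ) * q i = (lam:ℝ) * (q i - (h i : ℝ)) + ((m i : ℤ) : ℝ) := by
      rw [show ((m i : ℤ) : ℝ) = ((m i : ℕ) : ℝ) by push_cast; ring, hmR i]; ring
    rw [h1, round_add_intCast]
  have hmsum : (∑ i, (m i : ℤ)) = (H' : ℤ) := by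
    have h1 : ((∑ i, m i : ℕ) : ℚ) = (H' : ℚ) := by
      push_cast
      rw [Finset.sum_congr rfl (fun i _ => hm i), ← Finset.mul_sum, hH']
      congr 1
      exact_mod_cast hsum
    have h2 : (∑ i, m i) = H' := by exact_mod_cast h1
    exact_mod_cast h2
  have sumkey : ∑ i, round ((lam:ℝ) * q i) =
      (∑ i, round ((lam:ℝ) * (q i - (h i : ℝ)))) + (H' : ℤ) := by
    rw [← hmsum, ← Finset.sum_add_distrib]
    exact Finset.sum_congr rfl (fun i _ => key i)
  have hsumZ : (∑ i, ((h i : ℤ))) = (H : ℤ) := by exact_mod_cast hsum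
  -- bounds on q i in terms of round (q i)
  have lamk : ∀ k : ℤ, 0 ≤ k → lam ≤ 1 / (2 * (k : ℚ) + 1) →
      (lam:ℝ) * (2*(k:ℝ)+1) ≤ 1 := by
    intro k hk hl
    have hden : (0:ℚ) < 2 * (k:ℚ) + 1 := by
      have : (0:ℚ) ≤ (k:ℚ) := by exact_mod_cast hk
      linarith
    rw [le_div_iff₀ hden] at hl
    exact_mod_cast hl
  have hn0 : ∀ k : ℤ, (∀ i, |round (q i) - (h i : ℤ)| ≤ k) → 0 ≤ k := by
    intro k hk
    have hn : 0 < n := by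
      by_contra hc
      push_neg at hc
      interval_cases n
      simp at hsum
      omega
    exact le_trans (abs_nonneg _) (hk ⟨0, hn⟩)
  refine ⟨?_, ?_, ?_⟩
  · -- case (i)
    intro hri
    rw [sumkey]
    have : ∀ i ∈ Finset.univ, round ((lam:ℝ) * (q i - (h i : ℝ))) = 0 := by
      intro i _
      apply my_rsharp _ _ 0 hlamR0 le_rfl (by norm_num; linarith)
      · have := my_qlb (q i); rw [hri i] at this; push_cast at this ⊢; linarith
      · have := my_qub (q i); rw [hri i] at this; push_cast at this ⊢; linarith
    rw [Finset.sum_congr rfl this]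
    simp
  · -- case (ii)+
    intro c hc hge hsc
    have hb : ∀ i, 0 ≤ round ((lam:ℝ) * (q i - (h i : ℝ))) ∧
        round ((lam:ℝ) * (q i - (h i : ℝ))) ≤ round (q i) - (h i : ℤ) := by
      intro i
      have hd : 0 ≤ round (q i) - (h i : ℤ) := by linarith [hge i]
      have h1 := my_qlb (q i)
      have h2 := my_qub (q i)
      have hcast : ((round (q i) - (h i : ℤ) : ℤ) : ℝ) = (round (q i) : ℝ) - (h i : ℝ) := by
        push_cast; ring
      have hd' : (0:ℝ) ≤ (round (q i) : ℝ) - (h i : ℝ) := by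
        have : ((round (q i) : ℤ) : ℝ) - ((h i : ℤ) : ℝ) = (round (q i) : ℝ) - (h i : ℝ) := by
          push_cast; ring
        rw [← this]; exact_mod_cast hd
      have := my_rbound (lam:ℝ) (q i - (h i : ℝ)) (round (q i) - (h i : ℤ))
        hlamR0 hlamR1 hd (by rw [hcast]; linarith) (by rw [hcast]; linarith)
      have hlow : (0:ℤ) ≤ round ((lam:ℝ) * (q i - (h i : ℝ))) := by
        apply my_le_round
        push_cast
        nlinarith [mul_nonneg hlamR0.le (by linarith : (0:ℝ) ≤ q i - (h i : ℝ) + 1/2)]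
      exact ⟨hlow, this.2⟩
    constructor
    · constructor
      · rw [sumkey]
        have : 0 ≤ ∑ i, round ((lam:ℝ) * (q i - (h i : ℝ))) :=
          Finset.sum_nonneg (fun i _ => (hb i).1)
        linarith
      · rw [sumkey]
        have h1 : ∑ i, round ((lam:ℝ) * (q i - (h i : ℝ))) ≤
            ∑ i, (round (q i) - (h i : ℤ)) :=
          Finset.sum_le_sum (fun i _ => (hb i).2)
        rw [Finset.sum_sub_distrib, hsc, hsumZ] at h1
        linarith
    · intro k hk hl
      have hk0 := hn0 k hk
      have hlR := lamk k hk0 hl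
      rw [sumkey]
      have : ∀ i ∈ Finset.univ, round ((lam:ℝ) * (q i - (h i : ℝ))) = 0 := by
        intro i _
        have hdk : round (q i) - (h i : ℤ) ≤ k := le_trans (le_abs_self _) (hk i)
        have hdk' : ((round (q i) : ℝ) - (h i : ℝ)) ≤ (k:ℝ) := by exact_mod_cast hdk
        have hd0 : (0:ℝ) ≤ (round (q i) : ℝ) - (h i : ℝ) := by
          have : (h i : ℤ) ≤ round (q i) := hge i
          exact_mod_cast sub_nonneg.mpr (by exact_mod_cast this)
        have h1 := my_qlb (q i)
        have h2 := my_qub (q i)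
        exact my_rsharp _ _ k hlamR0 hk0 hlR (by linarith) (by linarith)
      rw [Finset.sum_congr rfl this]
      simp
  · -- case (ii)-
    intro c hc hle hsc
    have hb : ∀ i, -((h i : ℤ) - round (q i)) ≤ round ((lam:ℝ) * (q i - (h i : ℝ))) ∧
        round ((lam:ℝ) * (q i - (h i : ℝ))) ≤ 0 := by
      intro i
      have hd : 0 ≤ (h i : ℤ) - round (q i) := by linarith [hle i]
      have h1 := my_qlb (q i)
      have h2 := my_qub (q i)
      have hcast : (((h i : ℤ) - round (q i) : ℤ) : ℝ) = (h i : ℝ) - (round (q i) : ℝ) := by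
        push_cast; ring
      have hd' : (0:ℝ) ≤ (h i : ℝ) - (round (q i) : ℝ) := by
        have : ((h i : ℤ) : ℝ) - ((round (q i) : ℤ) : ℝ) = (h i : ℝ) - (round (q i) : ℝ) := by
          push_cast; ring
        rw [← this]; exact_mod_cast hd
      have := my_rbound (lam:ℝ) (q i - (h i : ℝ)) ((h i : ℤ) - round (q i))
        hlamR0 hlamR1 hd (by rw [hcast]; linarith) (by rw [hcast]; linarith)
      have hup : round ((lam:ℝ) * (q i - (h i : ℝ))) ≤ 0 := by
        apply my_round_le
        push_cast
        nlinarith [mul_pos hlamR0 (by linarith : (0:ℝ) < 1/2 - (q i - (h i : ℝ)))]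
      exact ⟨this.1, hup⟩
    constructor
    · constructor
      · rw [sumkey]
        have h1 : ∑ i, -((h i : ℤ) - round (q i)) ≤
            ∑ i, round ((lam:ℝ) * (q i - (h i : ℝ))) :=
          Finset.sum_le_sum (fun i _ => (hb i).1)
        have h2 : ∑ i, -((h i : ℤ) - round (q i)) = -c := by
          rw [Finset.sum_neg_distrib, Finset.sum_sub_distrib, hsc, hsumZ]
          ring
        linarith
      · rw [sumkey]
        have : ∑ i, round ((lam:ℝ) * (q i - (h i : ℝ))) ≤ 0 :=
          Finset.sum_nonpos (fun i _ => (hb i).2)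
        linarith
    · intro k hk hl
      have hk0 := hn0 k hk
      have hlR := lamk k hk0 hl
      rw [sumkey]
      have : ∀ i ∈ Finset.univ, round ((lam:ℝ) * (q i - (h i : ℝ))) = 0 := by
        intro i _
        have hdk : (h i : ℤ) - round (q i) ≤ k := by
          have := hk i; rw [abs_sub_comm] at this
          exact le_trans (le_abs_self _) this
        have hdk' : ((h i : ℝ) - (round (q i) : ℝ)) ≤ (k:ℝ) := by exact_mod_cast hdk
        have hd0 : (0:ℝ) ≤ (h i : ℝ) - (round (q i) : ℝ) := by
          have : round (q i) ≤ (h i : ℤ) := hle i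
          exact_mod_cast sub_nonneg.mpr (by exact_mod_cast this)
        have h1 := my_qlb (q i)
        have h2 := my_qub (q i)
        exact my_rsharp _ _ k hlamR0 hk0 hlR (by linarith) (by linarith)
      rw [Finset.sum_congr rfl this]
      simp
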